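/- In the Fraenkel–Mostowski permutation model determined by a group G of permutations of the set U of atoms with the filter generated by finite supports, the set U has no countably infinite subset (is Dedekind finite) if and only if definable closure for G on U is locally finite, i.e., for every finite A ⊆ U, the set dcl(A) = {x ∈ U : every g ∈ G fixing A pointwise fixes x} is finite. -/
import Mathlib


/-- The definable closure of `A` under a group `G` of permutations of `Y`:
the set of points fixed by every element of `G` fixing `A` pointwise. -/
def dclP {Y : Type*} (G : Subgroup (Equiv.Perm Y)) (A : Set Y) : Set Y :=
  {y | ∀ g ∈ G, (∀ a ∈ A, g a = a) → g y = y}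

/-- Definable closure is locally finite: finite sets have finite definable closure. -/
def LocFin {Y : Type*} (G : Subgroup (Equiv.Perm Y)) : Prop :=
  ∀ A : Set Y, A.Finite → (dclP G A).Finite

/-- In the Fraenkel-Mostowski model with finite supports determined by G
acting on the set U of atoms, U is Dedekind finite iff definable closure is
locally finite; equivalently, there is a finitely supported injection ℕ → U iff
definable closure is not locally finite. -/
theorem stmt11 {U : Type*} (G : Subgroup (Equiv.Perm U)) :
    (∃ (f : ℕ → U) (A : Set U), A.Finite ∧ Function.Injective f ∧
        ∀ g ∈ G, (∀ a ∈ A, g a = a) → ∀ n, g (f n) = f n) ↔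
      ¬ LocFin G := by
  constructor
  · rintro ⟨f, A, hA, hf, hsupp⟩ hloc
    have hsub : Set.range f ⊆ dclP G A := by
      rintro _ ⟨n, rfl⟩ g hg hfix
      exact hsupp g hg hfix n
    exact ((Set.infinite_range_of_injective hf).mono hsub) (hloc A hA)
  · intro h
    rw [LocFin] at h
    push_neg at h
    obtain ⟨A, hA, hinf⟩ := h
    have e := Set.Infinite.natEmbedding _ hinf
    refine ⟨fun n => (e n : U), A, hA, fun m n hmn => e.injective (Subtype.ext hmn),
      fun g hg hfix n => (e n).2 g hg hfix⟩
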